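/- Let H be a normal subgroup of a regular Hausdorff abelian paratopological group G such that H is locally compact in the group reflexion G♭. Then the quotient paratopological group G/H is regular. -/

import Mathlib

open Topology Filter Set Pointwise

/-- The group reflexion topology `τ♭`: the strongest group topology on `G` weaker than `τ`. -/
def flatTop (G : Type*) [Group G] (τ : TopologicalSpace G) : TopologicalSpace G :=
  sInf {t : TopologicalSpace G | τ ≤ t ∧ @IsTopologicalGroup G t _}

section Flat

variable {G : Type*} [CommGroup G] [τ : TopologicalSpace G] [ContinuousMul G]

theorem tau_le_flatTop : τ ≤ flatTop G τ := le_sInf fun _ ht => ht.1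

theorem flatTop_topologicalGroup : @IsTopologicalGroup G (flatTop G τ) _ :=
  topologicalGroup_sInf fun _ ht => ht.2

/-- The group filter basis of sets `W * W⁻¹`, `W ∈ 𝓝 1`. -/
def flatBasis (G : Type*) [CommGroup G] [τ : TopologicalSpace G] [ContinuousMul G] :
    GroupFilterBasis G := by
  apply groupFilterBasisOfComm {s : Set G | ∃ W ∈ 𝓝 (1 : G), s = W * W⁻¹}
  · exact ⟨Set.univ * Set.univ⁻¹, Set.univ, univ_mem, rfl⟩
  · rintro _ _ ⟨W₁, h₁, rfl⟩ ⟨W₂, h₂, rfl⟩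
    refine ⟨(W₁ ∩ W₂) * (W₁ ∩ W₂)⁻¹, ⟨W₁ ∩ W₂, inter_mem h₁ h₂, rfl⟩, ?_⟩
    exact subset_inter
      (mul_subset_mul inter_subset_left (inv_subset_inv.2 inter_subset_left))
      (mul_subset_mul inter_subset_right (inv_subset_inv.2 inter_subset_right))
  · rintro _ ⟨W, hW, rfl⟩
    refine ⟨1, mem_of_mem_nhds hW, 1, ?_, mul_one 1⟩
    simpa using mem_of_mem_nhds hW
  · rintro _ ⟨W, hW, rfl⟩
    have : Tendsto (fun p : G × G => p.1 * p.2) (𝓝 1 ×ˢ 𝓝 1) (𝓝 (1 : G)) := by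
      rw [← nhds_prod_eq]
      simpa using (continuous_mul.tendsto ((1 : G), (1 : G)))
    rcases mem_prod_iff.1 (this hW) with ⟨V₁, hV₁, V₂, hV₂, hV⟩
    have hVV : (V₁ ∩ V₂) * (V₁ ∩ V₂) ⊆ W := by
      rintro _ ⟨a, ha, b, hb, rfl⟩
      exact hV (Set.mk_mem_prod ha.1 hb.2)
    refine ⟨(V₁ ∩ V₂) * (V₁ ∩ V₂)⁻¹, ⟨V₁ ∩ V₂, inter_mem hV₁ hV₂, rfl⟩, ?_⟩
    rintro _ ⟨_, ⟨a, ha, b, hb, rfl⟩, _, ⟨c, hc, d, hd, rfl⟩, rfl⟩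
    rw [Set.mem_inv] at hb hd
    refine ⟨a * c, hVV ⟨a, ha, c, hc, rfl⟩, b * d, ?_, by ac_rfl⟩
    rw [Set.mem_inv, mul_inv]
    exact hVV ⟨b⁻¹, hb, d⁻¹, hd, rfl⟩
  · rintro _ ⟨W, hW, rfl⟩
    refine ⟨W * W⁻¹, ⟨W, hW, rfl⟩, ?_⟩
    rintro _ ⟨a, ha, b, hb, rfl⟩
    rw [Set.mem_inv] at hb
    exact ⟨b⁻¹, hb, a⁻¹, by simpa using ha, by group⟩

theorem tau_le_flatBasis_topology : τ ≤ (flatBasis G).topology := by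
  refine le_of_nhds_le_nhds fun x => ?_
  rw [((flatBasis G).nhds_hasBasis x).ge_iff]
  rintro _ ⟨W, hW, rfl⟩
  have hmap : Filter.map (fun y => x * y) (𝓝 (1 : G)) = 𝓝 x :=
    ((Homeomorph.mulLeft x).map_nhds_eq 1).trans (by simp)
  have : (fun y => x * y) '' W ∈ 𝓝 x := hmap ▸ image_mem_map hW
  refine mem_of_superset this (Set.image_mono ?_)
  intro w hw
  exact ⟨w, hw, 1, by simpa using mem_of_mem_nhds hW, mul_one w⟩

theorem flatTop_le_flatBasis_topology : flatTop G τ ≤ (flatBasis G).topology :=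
  sInf_le ⟨tau_le_flatBasis_topology, (flatBasis G).isTopologicalGroup⟩

/-- Fact 1: `W * W⁻¹` is a ♭-neighborhood of `1`. -/
theorem sq_mem_flat_nhds {W : Set G} (hW : W ∈ 𝓝 (1 : G)) :
    W * W⁻¹ ∈ @nhds G (flatTop G τ) 1 :=
  nhds_mono flatTop_le_flatBasis_topology ((flatBasis G).mem_nhds_one ⟨W, hW, rfl⟩)

theorem sq_subset_of_nhds_in_group {G : Type*} [CommGroup G] {t : TopologicalSpace G}
    (ht : @IsTopologicalGroup G t _) {P : Set G} (hP : P ∈ @nhds G t 1) :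
    ∃ Q ∈ @nhds G t 1, Q * Q⁻¹ ⊆ P := by
  letI := t
  haveI := ht
  rcases exists_nhds_split_inv hP with ⟨V, hV, h⟩
  refine ⟨V, hV, ?_⟩
  rintro _ ⟨a, ha, b, hb, rfl⟩
  rw [Set.mem_inv] at hb
  simpa [div_eq_mul_inv] using h a ha b⁻¹ hb

/-- Fact 2: every ♭-neighborhood of `1` contains some `W * W⁻¹` with `W` a `τ`-neighborhood. -/
theorem exists_sq_subset_flat_nhds {P : Set G} (hP : P ∈ @nhds G (flatTop G τ) 1) :
    ∃ W ∈ 𝓝 (1 : G), W * W⁻¹ ⊆ P := by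
  rcases sq_subset_of_nhds_in_group flatTop_topologicalGroup hP with ⟨Q, hQ, hQP⟩
  exact ⟨Q, nhds_mono tau_le_flatTop hQ, hQP⟩

theorem mem_closure_iff_nhds_t {X : Type*} (t : TopologicalSpace X) {x : X} {s : Set X} :
    x ∈ closure[t] s ↔ ∀ u ∈ @nhds X t x, (u ∩ s).Nonempty := by
  letI := t; exact mem_closure_iff_nhds

theorem map_mulLeft_nhds_t {X : Type*} [CommGroup X] (t : TopologicalSpace X)
    (hc : @ContinuousMul X t _) (x : X) :
    Filter.map (fun y => x * y) (@nhds X t 1) = @nhds X t x := by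
  letI := t; haveI := hc
  exact ((Homeomorph.mulLeft x).map_nhds_eq 1).trans (by simp)

theorem closure_subset_flat_closure (s : Set G) :
    closure s ⊆ closure[flatTop G τ] s :=
  closure.mono tau_le_flatTop

theorem closure_mul_compact_subset {G : Type*} [CommGroup G] {t : TopologicalSpace G}
    (ht : @IsTopologicalGroup G t _) (V : Set G) {K : Set G} (hK : @IsCompact G t K) :
    closure[t] (V * K) ⊆ closure[t] V * K := by
  letI := t
  haveI := ht
  exact closure_minimal (mul_subset_mul_right subset_closure)
    (isClosed_closure.mul_right_of_isCompact hK)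

/-- Lemma A': the flat closure of `V` is contained in the `τ`-closure of `V * W₀`. -/
theorem flat_closure_subset_closure_mul (V : Set G) {W₀ : Set G} (hW₀ : W₀ ∈ 𝓝 (1 : G)) :
    closure[flatTop G τ] V ⊆ closure (V * W₀) := by
  intro x hx
  rw [mem_closure_iff_nhds]
  intro t ht
  have hmap := map_mulLeft_nhds_t τ inferInstance x
  have ht1 : (fun y => x * y) ⁻¹' t ∈ 𝓝 (1 : G) := by
    rw [← hmap] at ht; exact ht
  set N := W₀ ∩ (fun y => x * y) ⁻¹' t with hN
  have hNmem : N ∈ 𝓝 (1 : G) := inter_mem hW₀ ht1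
  have hfg : @IsTopologicalGroup G (flatTop G τ) _ := flatTop_topologicalGroup
  have hmapf := map_mulLeft_nhds_t (flatTop G τ) hfg.toContinuousMul x
  have hS : (fun y => x * y) '' (N * N⁻¹) ∈ @nhds G (flatTop G τ) x :=
    hmapf ▸ image_mem_map (sq_mem_flat_nhds hNmem)
  rcases (mem_closure_iff_nhds_t (flatTop G τ)).1 hx _ hS with
    ⟨y, ⟨_, ⟨n₁, hn₁, n₂, hn₂, rfl⟩, rfl⟩, hyV⟩
  rw [Set.mem_inv] at hn₂
  exact ⟨x * n₁, hn₁.2, ⟨x * (n₁ * n₂), hyV, n₂⁻¹, hn₂.1, by group⟩⟩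

/-- Lemma B. -/
theorem closure_mul_subgroup_subset (H : Subgroup G) {K O A B' V : Set G}
    (hOK : O ∩ (H : Set G) ⊆ K) (hA : A * A⁻¹ ⊆ O) (hB : B' * B' ⊆ A)
    (hB1 : B' ∈ 𝓝 (1 : G)) (hVB : V ⊆ B') :
    closure (V * (H : Set G)) ⊆ closure (V * K) * (H : Set G) := by
  intro x hx
  rw [mem_closure_iff_nhds] at hx
  have hmap := map_mulLeft_nhds_t τ inferInstance x
  rcases hx _ (hmap ▸ image_mem_map hB1) with ⟨_, ⟨b₀, hb₀, rfl⟩, v₀, hv₀, h₀, hh₀, hx0⟩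
  have e1 : v₀ * h₀ = x * b₀ := hx0
  set z := x * h₀⁻¹ with hz
  have hzc : z ∈ closure (V * K) := by
    rw [mem_closure_iff_nhds]
    intro t ht
    have hmapz := map_mulLeft_nhds_t τ inferInstance z
    have ht1 : (fun y => z * y) ⁻¹' t ∈ 𝓝 (1 : G) := by rw [← hmapz] at ht; exact ht
    rcases hx _ (hmap ▸ image_mem_map (inter_mem hB1 ht1)) with
      ⟨_, ⟨n, hn, rfl⟩, v, hv, h, hh, hx1⟩
    have e2 : v * h = x * n := hx1
    have key : h * h₀⁻¹ = (v₀ * n) * (v * b₀)⁻¹ := by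
      rw [← div_eq_mul_inv, ← div_eq_mul_inv, div_eq_div_iff_mul_eq_mul]
      calc h * (v * b₀) = (v * h) * b₀ := by ac_rfl
        _ = (x * n) * b₀ := by rw [e2]
        _ = (x * b₀) * n := by ac_rfl
        _ = (v₀ * h₀) * n := by rw [e1]
        _ = v₀ * n * h₀ := by ac_rfl
    have hk : h * h₀⁻¹ ∈ K := by
      apply hOK
      refine ⟨?_, mul_mem hh (inv_mem hh₀)⟩
      rw [key]
      apply hA
      refine ⟨v₀ * n, hB ⟨v₀, hVB hv₀, n, hn.1, rfl⟩, (v * b₀)⁻¹, ?_, rfl⟩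
      rw [Set.mem_inv, inv_inv]
      exact hB ⟨v, hVB hv, b₀, hb₀, rfl⟩
    refine ⟨z * n, hn.2, v, hv, h * h₀⁻¹, hk, ?_⟩
    calc v * (h * h₀⁻¹) = (v * h) * h₀⁻¹ := by group
      _ = (x * n) * h₀⁻¹ := by rw [e2]
      _ = z * n := by rw [hz]; ac_rfl
  exact ⟨z, hzc, h₀, hh₀, by rw [hz]; group⟩

theorem exists_sq_nhds {U : Set G} (hU : U ∈ 𝓝 (1 : G)) :
    ∃ V ∈ 𝓝 (1 : G), V * V ⊆ U := by
  have : Tendsto (fun p : G × G => p.1 * p.2) (𝓝 1 ×ˢ 𝓝 1) (𝓝 (1 : G)) := by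
    rw [← nhds_prod_eq]
    simpa using (continuous_mul.tendsto ((1 : G), (1 : G)))
  rcases mem_prod_iff.1 (this hU) with ⟨V₁, hV₁, V₂, hV₂, hV⟩
  refine ⟨V₁ ∩ V₂, inter_mem hV₁ hV₂, ?_⟩
  rintro _ ⟨a, ha, b, hb, rfl⟩
  exact hV (Set.mk_mem_prod ha.1 hb.2)

theorem mem_nhds_iff_t {X : Type*} (t : TopologicalSpace X) {s : Set X} {x : X} :
    s ∈ @nhds X t x ↔ ∃ u ⊆ s, IsOpen[t] u ∧ x ∈ u := by
  letI := t; exact mem_nhds_iff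

theorem isOpen_mem_nhds_t {X : Type*} (t : TopologicalSpace X) {s : Set X} {x : X}
    (h : IsOpen[t] s) (hx : x ∈ s) : s ∈ @nhds X t x := by
  letI := t; exact h.mem_nhds hx

/-- The main lemma: given a `flatTop`-compact set `K` trapping `O ∩ H`, every `τ`-neighborhood
`U` of `1` admits an open neighborhood `V` of `1` with `closure (V * H) ⊆ U * H`. -/
theorem main_lemma [RegularSpace G] (H : Subgroup G) {K O : Set G} (hKH : K ⊆ (H : Set G))
    (hKc : @IsCompact G (flatTop G τ) K) (hO : IsOpen[flatTop G τ] O) (hO1 : (1 : G) ∈ O)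
    (hOK : O ∩ (H : Set G) ⊆ K) {U : Set G} (hU : U ∈ 𝓝 (1 : G)) :
    ∃ V ∈ 𝓝 (1 : G), IsOpen V ∧ closure (V * (H : Set G)) ⊆ U * (H : Set G) := by
  have hOnhds : O ∈ @nhds G (flatTop G τ) 1 := isOpen_mem_nhds_t _ hO hO1
  rcases exists_sq_subset_flat_nhds hOnhds with ⟨A, hA1, hAO⟩
  rcases exists_sq_nhds hA1 with ⟨B', hB'1, hB'A⟩
  rcases exists_mem_nhds_isClosed_subset hU with ⟨C, hC, hCc, hCU⟩
  rcases exists_sq_nhds (interior_mem_nhds.2 hC) with ⟨V₀, hV₀1, hV₀C⟩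
  set V := interior (V₀ ∩ B') with hVdef
  have hV1 : V ∈ 𝓝 (1 : G) := interior_mem_nhds.2 (inter_mem hV₀1 hB'1)
  refine ⟨V, hV1, isOpen_interior, ?_⟩
  have step1 : closure (V * (H : Set G)) ⊆ closure (V * K) * (H : Set G) :=
    closure_mul_subgroup_subset H hOK hAO hB'A hB'1
      (interior_subset.trans inter_subset_right)
  have step2 : closure (V * K) ⊆ closure[flatTop G τ] V * K :=
    (closure_subset_flat_closure _).trans
      (closure_mul_compact_subset flatTop_topologicalGroup V hKc)
  have step3 : closure[flatTop G τ] V ⊆ closure (V * V₀) :=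
    flat_closure_subset_closure_mul V hV₀1
  have step4 : closure (V * V₀) ⊆ U := by
    have hsub : V * V₀ ⊆ interior C :=
      (mul_subset_mul_right (interior_subset.trans inter_subset_left)).trans hV₀C
    refine (closure_mono hsub).trans ((closure_mono interior_subset).trans ?_)
    rw [hCc.closure_eq]; exact hCU
  have hKHH : K * (H : Set G) ⊆ (H : Set G) := by
    rintro _ ⟨k, hk, h, hh, rfl⟩
    exact mul_mem (hKH hk) hh
  calc closure (V * (H : Set G)) ⊆ closure (V * K) * (H : Set G) := step1
    _ ⊆ (closure[flatTop G τ] V * K) * (H : Set G) := mul_subset_mul_right step2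
    _ ⊆ (U * K) * (H : Set G) :=
        mul_subset_mul_right (mul_subset_mul_right (step3.trans step4))
    _ ⊆ U * (H : Set G) := by rw [mul_assoc]; exact mul_subset_mul_left hKHH

end Flat

/-- Let `H` be a normal subgroup of a regular Hausdorff abelian paratopological group `G`
such that `H` is locally compact in the group reflexion `G♭`.  Then the quotient
paratopological group `G/H` is regular. -/
theorem stmt_15 {G : Type*} [CommGroup G] [τ : TopologicalSpace G] [ContinuousMul G]
    [T2Space G] [RegularSpace G] (H : Subgroup G) [H.Normal]
    (hlc : @LocallyCompactSpace H
      (TopologicalSpace.induced (Subtype.val : H → G) (flatTop G τ))) :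
    RegularSpace (G ⧸ H) := by
  -- Extract a flat-compact set `K ⊆ H` and a flat-open set `O ∋ 1` with `O ∩ H ⊆ K`.
  obtain ⟨s, hs, -, hsc⟩ :=
    @LocallyCompactSpace.local_compact_nhds H
      (TopologicalSpace.induced (Subtype.val : H → G) (flatTop G τ)) hlc
      ⟨1, H.one_mem⟩ Set.univ Filter.univ_mem
  have heq := @nhds_induced G H (flatTop G τ) (Subtype.val : H → G) ⟨1, H.one_mem⟩
  rw [heq] at hs
  rcases Filter.mem_comap.1 hs with ⟨T, hT, hTs⟩
  rcases (mem_nhds_iff_t (flatTop G τ)).1 hT with ⟨O, hOT, hOopen, hO1⟩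
  set K : Set G := Subtype.val '' s with hK
  have hKH : K ⊆ (H : Set G) := by rintro _ ⟨⟨g, hg⟩, -, rfl⟩; exact hg
  have hKc : @IsCompact G (flatTop G τ) K := by
    refine @IsCompact.image H G
      (TopologicalSpace.induced (Subtype.val : H → G) (flatTop G τ)) (flatTop G τ)
      s Subtype.val hsc ?_
    exact continuous_induced_dom
  have hOK : O ∩ (H : Set G) ⊆ K := by
    rintro g ⟨hgO, hgH⟩
    exact ⟨⟨g, hgH⟩, hTs (hOT hgO), rfl⟩
  -- now prove regularity of the quotient
  refine RegularSpace.of_exists_mem_nhds_isClosed_subset fun q sQ hsQ => ?_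
  obtain ⟨x, rfl⟩ := QuotientGroup.mk_surjective q
  have hmk : Filter.map (QuotientGroup.mk : G → G ⧸ H) (𝓝 x) = 𝓝 (QuotientGroup.mk x) :=
    QuotientGroup.isOpenQuotientMap_mk.map_nhds_eq x
  have hpre : (QuotientGroup.mk : G → G ⧸ H) ⁻¹' sQ ∈ 𝓝 x := by
    rw [← hmk] at hsQ; exact hsQ
  have hmapx := map_mulLeft_nhds_t τ inferInstance x
  set U : Set G := (fun g => x * g) ⁻¹' ((QuotientGroup.mk : G → G ⧸ H) ⁻¹' sQ) with hUdef
  have hU : U ∈ 𝓝 (1 : G) := by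
    rw [← hmapx] at hpre; exact hpre
  obtain ⟨V, hV, hVopen, hVcl⟩ := main_lemma H hKH hKc hOopen hO1 hOK hU
  set C : Set G := closure (V * (H : Set G)) with hCdef
  have hCH : ∀ c ∈ C, ∀ h ∈ H, c * h ∈ C := by
    intro c hc h hh
    have himg := (Homeomorph.mulRight h).image_closure (V * (H : Set G))
    have hsub : ⇑(Homeomorph.mulRight h) '' (V * (H : Set G)) ⊆ V * (H : Set G) := by
      rintro _ ⟨_, ⟨v, hv, h', hh', rfl⟩, rfl⟩
      exact ⟨v, hv, h' * h, mul_mem hh' hh, (mul_assoc _ _ _).symm⟩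
    have hmem : c * h ∈ ⇑(Homeomorph.mulRight h) '' closure (V * (H : Set G)) :=
      ⟨c, hc, rfl⟩
    rw [himg] at hmem
    exact closure_mono hsub hmem
  refine ⟨(QuotientGroup.mk : G → G ⧸ H) '' ((fun g => x * g) '' C), ?_, ?_, ?_⟩
  · -- neighborhood of mk x
    refine Filter.mem_of_superset ?_
      (Set.image_mono (Set.image_mono (?_ : V ⊆ C)))
    · have hopen : IsOpen ((QuotientGroup.mk : G → G ⧸ H) '' ((fun g => x * g) '' V)) :=
        QuotientGroup.isOpenMap_coe _ (isOpenMap_mul_left x _ hVopen)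
      refine hopen.mem_nhds ⟨x * 1, ⟨1, mem_of_mem_nhds hV, rfl⟩, by simp⟩
    · exact fun v hv => subset_closure ⟨v, hv, 1, H.one_mem, mul_one v⟩
  · -- closed
    rw [← QuotientGroup.isOpenQuotientMap_mk.isQuotientMap.isClosed_preimage]
    have hsat : (QuotientGroup.mk : G → G ⧸ H) ⁻¹'
        (QuotientGroup.mk '' ((fun g => x * g) '' C)) = (fun g => x * g) '' C := by
      apply Set.Subset.antisymm
      · rintro g hg
        rcases hg with ⟨_, ⟨c, hc, rfl⟩, hgc⟩
        have hmem : (x * c)⁻¹ * g ∈ H := QuotientGroup.eq.1 hgc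
        refine ⟨c * ((x * c)⁻¹ * g), hCH c hc _ hmem, ?_⟩
        group
      · exact Set.subset_preimage_image _ _
    rw [hsat]
    exact (isClosedMap_mul_left x) _ isClosed_closure
  · -- contained in sQ
    rintro _ ⟨_, ⟨c, hc, rfl⟩, rfl⟩
    rcases hVcl hc with ⟨u, hu, h, hh, rfl⟩
    have : (QuotientGroup.mk (x * (u * h)) : G ⧸ H) = QuotientGroup.mk (x * u) := by
      rw [← mul_assoc]
      exact QuotientGroup.mk_mul_of_mem (x * u) hh
    rw [this]
    exact hu
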